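/- In a regular execution with no color changes, any process u that executes rules infinitely often has, forever, some child that also executes rules infinitely often; hence there exists a cycle path u_1,...,u_l (P.u_i = u_{i-1} for 1 < i ≤ l and P.u_1 = u_l) all of whose processes execute infinitely often. -/
import Mathlib


namespace BFS

inductive Status : Type
  | Idle | Working | Power | WeakE | StrongE
deriving DecidableEq

open Status

inductive Rule (V : Type) : Type
  | RC1 | RC2 | RC3 | RC4 | RC5 | RC6
  | R1 | R2
  | R3 (v : V)
  | R4 | R5 | R6 | R7
deriving DecidableEq

structure ProcState (V : Type) where
  P : Option V
  TS : Option V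
  C : Bool
  S : Status
  ph : Bool

abbrev Config (V : Type) := V → ProcState V

variable {V : Type} [Fintype V] [DecidableEq V]

/-- Erroneous statuses. -/
def Erroneous (s : Status) : Prop := s = WeakE ∨ s = StrongE

/-- The children of `u`: neighbors whose parent pointer designates `u`. -/
def Child (G : SimpleGraph V) (c : Config V) (u : V) : Set V :=
  {v | G.Adj u v ∧ (c v).P = some u}

/-- Closed neighborhood `N[u]`. -/
def ClosedNbr (G : SimpleGraph V) (u : V) : Set V := insert u (G.neighborSet u)

def StrongConflict (G : SimpleGraph V) (c : Config V) (u : V) : Prop :=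
  (c u).S ≠ StrongE ∧
    ∃ w ∈ ClosedNbr G u, ∃ v ∈ ClosedNbr G u,
      (c v).C ≠ (c u).C ∧ (c w).S = Power ∧ (c v).S = Power

def Conflict (G : SimpleGraph V) (r : V) (c : Config V) (u : V) : Prop :=
  (u ≠ r ∧ (c u).P ≠ none ∧
      ∃ v ∈ G.neighborSet u, (c v).S = Power ∧ (c v).C ≠ (c u).C) ∨
  (u = r ∧ (c u).S ≠ StrongE ∧
      ∃ v ∈ G.neighborSet u, (c v).S = Power ∧
        ((c v).C ≠ (c u).C ∨ Child G c u = ∅))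

def Detached (G : SimpleGraph V) (r : V) (c : Config V) (u : V) : Prop :=
  Child G c u = ∅ ∧ ((c u).P = none ∨ u = r) ∧ (c u).S ≠ Power

def StrongEReady (G : SimpleGraph V) (c : Config V) (u : V) : Prop :=
  (c u).S = StrongE ∧ ∀ v ∈ G.neighborSet u, (c v).S ≠ Power

def PowerFaulty (G : SimpleGraph V) (c : Config V) (u : V) : Prop :=
  (c u).S = Power ∧ ∃ v ∈ G.neighborSet u, (c v).S = StrongE

def Faulty (G : SimpleGraph V) (r : V) (c : Config V) (u : V) : Prop :=
  u ≠ r ∧ ∃ p, (c u).P = some p ∧ ¬ Erroneous (c p).S ∧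
    (Erroneous (c u).S ∨
     (c u).C ≠ (c p).C ∨
     ((c p).S ≠ Working ∧ (c u).S ≠ Idle) ∨
     ((c p).S = (c u).S ∧ (c u).ph ≠ (c p).ph) ∨
     ((c u).S = Power ∧ (c u).ph ≠ (c p).ph) ∨
     ((c p).S = Power ∧ (Child G c u ≠ ∅ ∨ (c u).ph ≠ (c p).ph)))

def IllegalRoot (G : SimpleGraph V) (r : V) (c : Config V) (u : V) : Prop :=
  u ≠ r ∧ (c u).P = none ∧ ¬ Detached G r c u

def IllegalLiveRoot (G : SimpleGraph V) (r : V) (c : Config V) (u : V) : Prop :=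
  IllegalRoot G r c u ∧ ¬ Erroneous (c u).S

def IllegalChild (r : V) (c : Config V) (u : V) : Prop :=
  u ≠ r ∧ ∃ p, (c u).P = some p ∧ Erroneous (c p).S

def Isolated (G : SimpleGraph V) (c : Config V) (u : V) : Prop :=
  (c u).S = WeakE ∨ (c u).S = Working ∨ StrongEReady G c u

def Ok (G : SimpleGraph V) (r : V) (c : Config V) (u : V) : Prop :=
  ¬ StrongConflict G c u ∧ ¬ Conflict G r c u ∧ ¬ PowerFaulty G c u ∧
  ¬ Faulty G r c u ∧ ¬ IllegalRoot G r c u ∧ ¬ IllegalChild r c u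

def QuietSubTree (G : SimpleGraph V) (c : Config V) (u : V) : Prop :=
  ∀ v ∈ Child G c u, (c v).S = Idle ∧ (c v).ph = (c u).ph

def EndFirstPhase (G : SimpleGraph V) (c : Config V) (u : V) : Prop :=
  (c u).S = Power ∧ QuietSubTree G c u ∧ ∀ v ∈ G.neighborSet u, (c v).C = (c u).C

def EndPhase (G : SimpleGraph V) (c : Config V) (u : V) : Prop :=
  (c u).S = Working ∧ QuietSubTree G c u

def EndLastPhase (G : SimpleGraph V) (c : Config V) (u : V) : Prop :=
  Child G c u = ∅ ∧ (EndFirstPhase G c u ∨ EndPhase G c u)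

def EndIntermediatePhase (G : SimpleGraph V) (c : Config V) (u : V) : Prop :=
  Child G c u ≠ ∅ ∧ (EndFirstPhase G c u ∨ EndPhase G c u)

def Connection (G : SimpleGraph V) (r : V) (c : Config V) (u v : V) : Prop :=
  Detached G r c u ∧ (Isolated G c u ∨ (c u).S = Idle) ∧
  G.Adj u v ∧ (c v).C ≠ (c u).C ∧ (c v).S = Power

def NewPhase (G : SimpleGraph V) (c : Config V) (u : V) : Prop :=
  ∃ p, (c u).P = some p ∧ QuietSubTree G c u ∧ (c u).S = Idle ∧ (c u).ph ≠ (c p).ph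

/-- Guards of the rules RC1–RC6, R1–R7 of the algorithm. -/
def Guard (G : SimpleGraph V) (r : V) : Rule V → Config V → V → Prop
  | .RC1, c, u => u = r ∧ ¬ Conflict G r c u ∧ PowerFaulty G c u ∧ QuietSubTree G c u
  | .RC2, c, u => u = r ∧ Detached G r c u ∧ StrongEReady G c u
  | .RC3, c, u => u = r ∧ Conflict G r c u
  | .RC4, c, u => u ≠ r ∧ StrongConflict G c u
  | .RC5, c, u => u ≠ r ∧ ¬ StrongConflict G c u ∧
      (Conflict G r c u ∨ Faulty G r c u ∨ PowerFaulty G c u ∨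
       IllegalLiveRoot G r c u ∨ IllegalChild r c u)
  | .RC6, c, u => u ≠ r ∧ Detached G r c u ∧ Isolated G c u ∧
      ∀ v ∈ G.neighborSet u, (c v).C = (c u).C ∨ (c v).S ≠ Power
  | .R1, c, u => u = r ∧ Ok G r c u ∧ EndLastPhase G c u ∧
      ∀ v ∈ G.neighborSet u, (c v).S ≠ StrongE
  | .R2, c, u => u = r ∧ Ok G r c u ∧ EndIntermediatePhase G c u
  | .R3 v, c, u => u ≠ r ∧ Ok G r c u ∧ Connection G r c u v
  | .R4, c, u => u ≠ r ∧ Ok G r c u ∧ NewPhase G c u ∧ Child G c u ≠ ∅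
  | .R5, c, u => u ≠ r ∧ Ok G r c u ∧ NewPhase G c u ∧ Child G c u = ∅ ∧
      ∀ v ∈ G.neighborSet u, (c v).S ≠ StrongE
  | .R6, c, u => u ≠ r ∧ Ok G r c u ∧ EndIntermediatePhase G c u
  | .R7, c, u => u ≠ r ∧ Ok G r c u ∧ (c u).P ≠ none ∧ EndLastPhase G c u

/-- Phase of the parent of `u` (or `u`'s own phase if it has no parent). -/
def parentPh (c : Config V) (u : V) : Bool :=
  match (c u).P with
  | some p => (c p).ph
  | none => (c u).ph

/-- The action of each rule: the new local state of the executing process `u`. -/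
def execRule (c : Config V) (u : V) : Rule V → ProcState V
  | .RC1 => { c u with S := Working }
  | .RC2 => { c u with S := Working }
  | .RC3 => { c u with S := StrongE }
  | .RC4 => { c u with S := StrongE, P := none }
  | .RC5 => { c u with S := WeakE, P := none }
  | .RC6 => { c u with S := Idle }
  | .R1 => { c u with C := !(c u).C, S := Power }
  | .R2 => { c u with ph := !(c u).ph, S := Working }
  | .R3 v => { c u with C := (c v).C, ph := (c v).ph, S := Idle, P := some v, TS := some v }
  | .R4 => { c u with ph := parentPh c u, S := Working }
  | .R5 => { c u with ph := parentPh c u, S := Power }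
  | .R6 => { c u with S := Idle }
  | .R7 => { c u with S := Idle, P := none }

/-- A computation step: a nonempty set of enabled processes each atomically
executes one enabled rule; all other processes keep their state. -/
def IsStep (G : SimpleGraph V) (r : V) (c1 : Config V)
    (act : V → Option (Rule V)) (c2 : Config V) : Prop :=
  (∃ u ρ, act u = some ρ) ∧
  ∀ u, (act u = none → c2 u = c1 u) ∧
       ∀ ρ, act u = some ρ → Guard G r ρ c1 u ∧ c2 u = execRule c1 u ρ

def Step (G : SimpleGraph V) (r : V) (c1 c2 : Config V) : Prop :=
  ∃ act, IsStep G r c1 act c2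

/-- A process is enabled if the guard of some rule holds at it. -/
def Enabled (G : SimpleGraph V) (r : V) (c : Config V) (u : V) : Prop :=
  ∃ ρ : Rule V, Guard G r ρ c u

/-- Well-formed configurations: pointers designate neighbors, and the root has
no parent and only uses the statuses Power, Working, StrongE. -/
def WellFormed (G : SimpleGraph V) (r : V) (c : Config V) : Prop :=
  (∀ u v, (c u).P = some v → G.Adj u v) ∧
  (∀ u v, (c u).TS = some v → G.Adj u v) ∧
  (c r).P = none ∧ (c r).TS = none ∧
  ((c r).S = Power ∨ (c r).S = Working ∨ (c r).S = StrongE)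

/-- `PowerParent u`: some descendant of `u` (possibly `u`) may take the `Power`
status by a series of R4/R5 moves. -/
inductive PowerParent (c : Config V) : V → Prop
  | base (u p : V) : (c u).P = some p → (c u).S = Idle → (c p).S = Working →
      (c u).ph ≠ (c p).ph → PowerParent c u
  | step (u p : V) : (c u).P = some p → PowerParent c p → (c u).S = Idle →
      (c u).ph = (c p).ph → PowerParent c u

def Influential (c : Config V) (u : V) : Prop :=
  (c u).S = Power ∨ PowerParent c u

/-- `u` lies on a branch rooted at `r` all of whose members are non-faulty,
and the root is not StrongE. -/
inductive InLegalTree (G : SimpleGraph V) (r : V) (c : Config V) : V → Prop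
  | root : (c r).S ≠ StrongE → InLegalTree G r c r
  | child (u p : V) : (c u).P = some p → InLegalTree G r c p →
      ¬ Faulty G r c u → InLegalTree G r c u

def InsideLegalTree (G : SimpleGraph V) (r : V) (c : Config V) (u : V) : Prop :=
  InLegalTree G r c u ∧ (c u).S ≠ Power ∧ Child G c u ≠ ∅

def UnSafe (G : SimpleGraph V) (r : V) (c : Config V) (u : V) : Prop :=
  InsideLegalTree G r c u ∧
    ∃ v ∈ G.neighborSet u, (c v).C ≠ (c u).C ∧ Influential c v

def UnRegular (G : SimpleGraph V) (r : V) (c : Config V) (u : V) : Prop :=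
  ¬ Detached G r c u ∧ ¬ InLegalTree G r c u

/-- Infinite executions of the algorithm (by Theorem `no deadlock` there is no
terminal configuration). -/
structure Execution (G : SimpleGraph V) (r : V) where
  conf : ℕ → Config V
  act : ℕ → V → Option (Rule V)
  valid : ∀ i, IsStep G r (conf i) (act i) (conf (i + 1))

/-- The suffix of an execution starting at time `k`. -/
def Execution.shift {G : SimpleGraph V} {r : V} (e : Execution G r) (k : ℕ) :
    Execution G r where
  conf := fun i => e.conf (k + i)
  act := fun i => e.act (k + i)
  valid := fun i => e.valid (k + i)

/-- The first round of `e` is completed by time `t`: every process enabled in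
the initial configuration has executed a rule or been neutralized before `t`. -/
def CompletesRound (G : SimpleGraph V) (r : V) (e : Execution G r) (t : ℕ) : Prop :=
  ∀ u, Enabled G r (e.conf 0) u →
    ∃ j, j < t ∧ (e.act j u ≠ none ∨ ¬ Enabled G r (e.conf (j + 1)) u)

/-- `RoundsElapsed G r e k t`: at least `k` rounds of `e` are completed by time `t`. -/
def RoundsElapsed (G : SimpleGraph V) (r : V) (e : Execution G r) : ℕ → ℕ → Prop
  | 0, t => t = 0
  | k + 1, t => ∃ s, s ≤ t ∧ RoundsElapsed G r e k s ∧
      CompletesRound G r (e.shift s) (t - s)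

/-- The tree-construction rules R1–R7. -/
def TreeRule : Rule V → Prop := fun ρ =>
  ρ = Rule.R1 ∨ ρ = Rule.R2 ∨ (∃ v, ρ = Rule.R3 v) ∨ ρ = Rule.R4 ∨
  ρ = Rule.R5 ∨ ρ = Rule.R6 ∨ ρ = Rule.R7

noncomputable def FaultyCount (G : SimpleGraph V) (r : V) (c : Config V) : ℕ :=
  {u | Faulty G r c u}.ncard

/-- Inside-safe executions: insideLegalTree processes execute only R1–R7 and
the number of Faulty processes stays constant. -/
def InsideSafeExec (G : SimpleGraph V) (r : V) (e : Execution G r) : Prop :=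
  (∀ i u ρ, InsideLegalTree G r (e.conf i) u → e.act i u = some ρ → TreeRule ρ) ∧
  (∀ i, FaultyCount G r (e.conf i) = FaultyCount G r (e.conf 0))

/-- Safe executions. -/
def SafeExec (G : SimpleGraph V) (r : V) (e : Execution G r) : Prop :=
  (∀ i u ρ, InsideLegalTree G r (e.conf i) u → e.act i u = some ρ → TreeRule ρ) ∧
  (∀ i u, Influential (e.conf i) u → UnRegular G r (e.conf i) u → e.act i u = none) ∧
  (∀ i u, ¬ PowerFaulty G (e.conf i) u → ¬ PowerFaulty G (e.conf (i + 1)) u) ∧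
  (∀ i u, e.act i u ≠ some Rule.RC1 ∧ e.act i u ≠ some Rule.RC4 ∧
      e.act i u ≠ some Rule.RC3 ∧ e.act i u ≠ some Rule.RC2)

/-- Pseudo-regular executions. -/
def PseudoRegularExec (G : SimpleGraph V) (r : V) (e : Execution G r) : Prop :=
  SafeExec G r e ∧
  (∀ i u ρ, InLegalTree G r (e.conf i) u → e.act i u = some ρ → TreeRule ρ) ∧
  (∀ i u, ¬ UnRegular G r (e.conf i) u → ¬ UnRegular G r (e.conf (i + 1)) u)

/-- Regular executions: pseudo-regular and all processes execute only R1–R7. -/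
def RegularExec (G : SimpleGraph V) (r : V) (e : Execution G r) : Prop :=
  PseudoRegularExec G r e ∧ (∀ i u ρ, e.act i u = some ρ → TreeRule ρ)

/-- `u` executes rules infinitely often along `e`. -/
def ActsInfOften {G : SimpleGraph V} {r : V} (e : Execution G r) (u : V) : Prop :=
  ∀ k, ∃ i, k ≤ i ∧ e.act i u ≠ none

def A1 (G : SimpleGraph V) (r : V) (c : Config V) : Prop :=
  ∀ u, ¬ Faulty G r c u ∧ ¬ IllegalLiveRoot G r c u

def A2 (G : SimpleGraph V) (r : V) (c : Config V) : Prop :=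
  A1 G r c ∧ ∀ u, ¬ UnSafe G r c u

def A3 (G : SimpleGraph V) (r : V) (c : Config V) : Prop :=
  A2 G r c ∧ ∀ u, ¬ Influential c u ∨ InLegalTree G r c u

def A4 (G : SimpleGraph V) (r : V) (c : Config V) : Prop :=
  A3 G r c ∧ ∀ u, (c u).S ≠ StrongE

def PIC (r : V) (c : Config V) (u : V) : Prop :=
  Influential c u ∧ (c u).C ≠ (c r).C

def PICPowerParent (r : V) (c : Config V) (u : V) : Prop :=
  PIC r c u ∧ PowerParent c u



section Stmt12Aux

variable {G : SimpleGraph V} {r : V} {e : Execution G r}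

lemma step_none {i : ℕ} {u : V} (h : e.act i u = none) : e.conf (i+1) u = e.conf i u :=
  ((e.valid i).2 u).1 h

lemma step_some {i : ℕ} {u : V} {ρ : Rule V} (h : e.act i u = some ρ) :
    Guard G r ρ (e.conf i) u ∧ e.conf (i+1) u = execRule (e.conf i) u ρ :=
  ((e.valid i).2 u).2 ρ h

lemma act_cases (hreg : RegularExec G r e)
    (hnc : ∀ i u, (e.conf (i + 1) u).C = (e.conf i u).C)
    {i : ℕ} {u : V} {ρ : Rule V} (h : e.act i u = some ρ) :
    ρ = Rule.R2 ∨ ρ = Rule.R4 ∨ ρ = Rule.R5 ∨ ρ = Rule.R6 ∨ ρ = Rule.R7 := by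
  have ht := hreg.2 i u ρ h
  obtain ⟨hg, hc⟩ := step_some h
  rcases ht with rfl | h2 | ⟨v, rfl⟩ | h4 | h5 | h6 | h7
  · exfalso
    have hC := hnc i u
    rw [hc] at hC
    simp [execRule] at hC
  · exact Or.inl h2
  · exfalso
    have hC := hnc i u
    rw [hc] at hC
    simp only [execRule] at hC
    simp only [Guard] at hg
    exact hg.2.2.2.2.2.1 hC
  · exact Or.inr (Or.inl h4)
  · exact Or.inr (Or.inr (Or.inl h5))
  · exact Or.inr (Or.inr (Or.inr (Or.inl h6)))
  · exact Or.inr (Or.inr (Or.inr (Or.inr h7)))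

lemma conf_const {u : V} {i j : ℕ} (hij : i ≤ j)
    (h : ∀ t, i ≤ t → t < j → e.act t u = none) : e.conf j u = e.conf i u := by
  induction j with
  | zero =>
    have : i = 0 := Nat.le_zero.mp hij
    rw [this]
  | succ j ih =>
    rcases Nat.eq_or_lt_of_le hij with rfl | hlt
    · rfl
    · have hj : i ≤ j := by omega
      rw [step_none (h j hj (by omega))]
      exact ih hj (fun t ht ht' => h t ht (by omega))

lemma P_preserved_back (hreg : RegularExec G r e)
    (hnc : ∀ i u, (e.conf (i + 1) u).C = (e.conf i u).C)
    {i : ℕ} {u v : V} (h : (e.conf (i+1) v).P = some u) : (e.conf i v).P = some u := by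
  cases hv : e.act i v with
  | none => rw [step_none hv] at h; exact h
  | some ρ =>
    obtain ⟨hg, hc⟩ := step_some hv
    rcases act_cases hreg hnc hv with rfl | rfl | rfl | rfl | rfl <;>
      rw [hc] at h <;> simp only [execRule] at h <;> try exact h
    simp at h

lemma P_back_le (hreg : RegularExec G r e)
    (hnc : ∀ i u, (e.conf (i + 1) u).C = (e.conf i u).C)
    {u v : V} {i j : ℕ} (hij : i ≤ j) (h : (e.conf j v).P = some u) :
    (e.conf i v).P = some u := by
  induction j with
  | zero =>
    have : i = 0 := Nat.le_zero.mp hij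
    rw [this]; exact h
  | succ j ih =>
    rcases Nat.eq_or_lt_of_le hij with rfl | hlt
    · exact h
    · exact ih (by omega) (P_preserved_back hreg hnc h)

lemma dead_step (hreg : RegularExec G r e)
    (hnc : ∀ i u, (e.conf (i + 1) u).C = (e.conf i u).C)
    {v : V} {t : ℕ} (hvr : v ≠ r) (hP : (e.conf t v).P = none)
    (hS : (e.conf t v).S = Status.Idle) : e.act t v = none := by
  cases hv : e.act t v with
  | none => rfl
  | some ρ =>
    exfalso
    obtain ⟨hg, _⟩ := step_some hv
    rcases act_cases hreg hnc hv with rfl | rfl | rfl | rfl | rfl <;>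
      simp only [Guard] at hg
    · exact hvr hg.1
    · obtain ⟨p, hp, _⟩ := hg.2.2.1
      rw [hP] at hp; cases hp
    · obtain ⟨p, hp, _⟩ := hg.2.2.1
      rw [hP] at hp; cases hp
    · rcases hg.2.2.2 with h1 | h1
      · have := h1.1; rw [hS] at this; simp at this
      · have := h1.1; rw [hS] at this; simp at this
    · exact hg.2.2.1 hP

lemma dead_forever (hreg : RegularExec G r e)
    (hnc : ∀ i u, (e.conf (i + 1) u).C = (e.conf i u).C)
    {v : V} {t : ℕ} (hvr : v ≠ r) (hP : (e.conf t v).P = none)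
    (hS : (e.conf t v).S = Status.Idle) :
    ∀ s, t ≤ s → e.act s v = none := by
  have key : ∀ d, e.conf (t+d) v = e.conf t v ∧ e.act (t+d) v = none := by
    intro d
    induction d with
    | zero => exact ⟨rfl, dead_step hreg hnc hvr hP hS⟩
    | succ d ih =>
      have h1 : e.conf (t+d+1) v = e.conf t v := by
        rw [step_none ih.2]; exact ih.1
      have h2 : e.act (t+d+1) v = none :=
        dead_step hreg hnc hvr (by rw [h1]; exact hP) (by rw [h1]; exact hS)
      exact ⟨h1, h2⟩
  intro s hs
  have := (key (s - t)).2
  rwa [Nat.add_sub_cancel' hs] at this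

lemma no_R7 (hreg : RegularExec G r e)
    (hnc : ∀ i u, (e.conf (i + 1) u).C = (e.conf i u).C)
    {v : V} (hv : ActsInfOften e v) (t : ℕ) : e.act t v ≠ some Rule.R7 := by
  intro h
  obtain ⟨hg, hc⟩ := step_some h
  simp only [Guard] at hg
  have hP : (e.conf (t+1) v).P = none := by rw [hc]; simp [execRule]
  have hS : (e.conf (t+1) v).S = Status.Idle := by rw [hc]; simp [execRule]
  obtain ⟨i, hi, hact⟩ := hv (t+1)
  exact hact (dead_forever hreg hnc hg.1 hP hS i hi)

lemma ph_change {v : V} {i k : ℕ} (hik : i ≤ k)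
    (h : (e.conf k v).ph ≠ (e.conf i v).ph) :
    ∃ t, i ≤ t ∧ t < k ∧ e.act t v ≠ none := by
  by_contra hcon
  push_neg at hcon
  exact h (congrArg ProcState.ph (conf_const hik hcon))

lemma first_act {v : V} (hv : ActsInfOften e v) (N : ℕ) :
    ∃ i, N ≤ i ∧ e.act i v ≠ none ∧ ∀ t, N ≤ t → t < i → e.act t v = none := by
  classical
  have hex : ∃ i, N ≤ i ∧ e.act i v ≠ none := hv N
  refine ⟨Nat.find hex, (Nat.find_spec hex).1, (Nat.find_spec hex).2, ?_⟩
  intro t ht htlt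
  by_contra hne
  exact Nat.find_min hex htlt ⟨ht, hne⟩

lemma rule_at (hreg : RegularExec G r e)
    (hnc : ∀ i u, (e.conf (i + 1) u).C = (e.conf i u).C)
    {u : V} (hu : ActsInfOften e u) {t : ℕ} (h : e.act t u ≠ none) (hur : u ≠ r) :
    e.act t u = some Rule.R4 ∨ e.act t u = some Rule.R5 ∨ e.act t u = some Rule.R6 := by
  cases hv : e.act t u with
  | none => exact absurd hv h
  | some ρ =>
    obtain ⟨hg, _⟩ := step_some hv
    rcases act_cases hreg hnc hv with rfl | rfl | rfl | rfl | rfl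
    · simp only [Guard] at hg; exact absurd hg.1 hur
    · exact Or.inl rfl
    · exact Or.inr (Or.inl rfl)
    · exact Or.inr (Or.inr rfl)
    · exact absurd hv (no_R7 hreg hnc hu t)

lemma act_R45_parts {u : V} {t : ℕ}
    (h : e.act t u = some Rule.R4 ∨ e.act t u = some Rule.R5) :
    (e.conf t u).S = Status.Idle ∧ (e.conf (t+1) u).ph ≠ (e.conf t u).ph ∧
    ((e.conf (t+1) u).S = Status.Working ∨ (e.conf (t+1) u).S = Status.Power) := by
  rcases h with h | h <;>
  · obtain ⟨hg, hc⟩ := step_some h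
    simp only [Guard] at hg
    obtain ⟨p, hp, _, hSid, hph⟩ := hg.2.2.1
    have hpar : parentPh (e.conf t) u = (e.conf t p).ph := by
      simp [parentPh, hp]
    rw [hc]
    simp only [execRule, hpar]
    exact ⟨hSid, fun hh => hph hh.symm, by simp⟩

lemma act_R6_parts {u : V} {t : ℕ} (h : e.act t u = some Rule.R6) :
    QuietSubTree G (e.conf t) u ∧ Child G (e.conf t) u ≠ ∅ ∧
    ((e.conf t u).S = Status.Power ∨ (e.conf t u).S = Status.Working) ∧
    (e.conf (t+1) u).S = Status.Idle ∧ (e.conf (t+1) u).ph = (e.conf t u).ph := by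
  obtain ⟨hg, hc⟩ := step_some h
  simp only [Guard] at hg
  obtain ⟨_, _, hch, hor⟩ := hg
  refine ⟨?_, hch, ?_, by rw [hc]; simp [execRule], by rw [hc]; simp [execRule]⟩
  · rcases hor with h1 | h1
    · exact h1.2.1
    · exact h1.2
  · rcases hor with h1 | h1
    · exact Or.inl h1.1
    · exact Or.inr h1.1

lemma act_R2_parts {u : V} {t : ℕ} (h : e.act t u = some Rule.R2) :
    QuietSubTree G (e.conf t) u ∧ Child G (e.conf t) u ≠ ∅ ∧
    (e.conf (t+1) u).ph = !(e.conf t u).ph := by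
  obtain ⟨hg, hc⟩ := step_some h
  simp only [Guard] at hg
  obtain ⟨_, _, hch, hor⟩ := hg
  refine ⟨?_, hch, by rw [hc]; simp [execRule]⟩
  rcases hor with h1 | h1
  · exact h1.2.1
  · exact h1.2

/-- Main technical lemma: a process acting infinitely often has, arbitrarily late,
pairs of quiet moments with different phases and a nonempty child set at the later one. -/
lemma quiet_pair (hreg : RegularExec G r e)
    (hnc : ∀ i u, (e.conf (i + 1) u).C = (e.conf i u).C)
    {u : V} (hu : ActsInfOften e u) (N : ℕ) :
    ∃ i k, N ≤ i ∧ i < k ∧ QuietSubTree G (e.conf i) u ∧ QuietSubTree G (e.conf k) u ∧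
      Child G (e.conf k) u ≠ ∅ ∧ (e.conf k u).ph ≠ (e.conf i u).ph := by
  by_cases hur : u = r
  · subst hur
    obtain ⟨i, hiN, hia, _⟩ := first_act hu N
    obtain ⟨k, hk, hka, hkmin⟩ := first_act hu (i+1)
    have hrule : ∀ t, e.act t u ≠ none → e.act t u = some Rule.R2 := by
      intro t ht
      cases hv : e.act t u with
      | none => exact absurd hv ht
      | some ρ =>
        obtain ⟨hg, _⟩ := step_some hv
        rcases act_cases hreg hnc hv with rfl | rfl | rfl | rfl | rfl <;>
          simp only [Guard] at hg
        · rfl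
        all_goals exact absurd rfl hg.1
    obtain ⟨hq1, _, hph⟩ := act_R2_parts (hrule i hia)
    obtain ⟨hq2, hch2, _⟩ := act_R2_parts (hrule k hka)
    have hconst : e.conf k u = e.conf (i+1) u := conf_const hk hkmin
    refine ⟨i, k, hiN, by omega, hq1, hq2, hch2, ?_⟩
    rw [hconst, hph]
    simp
  · -- find an R6 act time ≥ N
    have hfind : ∀ M, ∃ i, M ≤ i ∧ e.act i u = some Rule.R6 := by
      intro M
      obtain ⟨i0, hi0M, hi0a, _⟩ := first_act hu M
      rcases rule_at hreg hnc hu hi0a hur with h45 | h45 | h6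
      rotate_right
      · exact ⟨i0, hi0M, h6⟩
      all_goals
      · obtain ⟨_, _, hS1⟩ := act_R45_parts (e := e) (u := u) (t := i0) (by tauto)
        obtain ⟨i1, hi1, hi1a, hi1min⟩ := first_act hu (i0+1)
        have hc1 : e.conf i1 u = e.conf (i0+1) u := conf_const hi1 hi1min
        rcases rule_at hreg hnc hu hi1a hur with g45 | g45 | g6
        rotate_right
        · exact ⟨i1, by omega, g6⟩
        all_goals
        · exfalso
          have hid := (act_R45_parts (e := e) (u := u) (t := i1) (by tauto)).1
          rw [hc1] at hid
          rcases hS1 with hS1 | hS1 <;> rw [hS1] at hid <;> simp at hid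
    obtain ⟨i, hiN, hiR6⟩ := hfind N
    obtain ⟨hq1, _, _, hSid, hph1⟩ := act_R6_parts hiR6
    obtain ⟨j, hj, hja, hjmin⟩ := first_act hu (i+1)
    have hcj : e.conf j u = e.conf (i+1) u := conf_const hj hjmin
    have hj45 : e.act j u = some Rule.R4 ∨ e.act j u = some Rule.R5 := by
      rcases rule_at hreg hnc hu hja hur with g | g | g
      · exact Or.inl g
      · exact Or.inr g
      · exfalso
        have := (act_R6_parts g).2.2.1
        rw [hcj, hSid] at this
        rcases this with h | h <;> simp at h
    obtain ⟨_, hphj, hSj1⟩ := act_R45_parts hj45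
    obtain ⟨k, hkj, hka, hkmin⟩ := first_act hu (j+1)
    have hck : e.conf k u = e.conf (j+1) u := conf_const hkj hkmin
    have hk6 : e.act k u = some Rule.R6 := by
      rcases rule_at hreg hnc hu hka hur with g | g | g
      · exfalso
        have := (act_R45_parts (e := e) (u := u) (t := k) (Or.inl g)).1
        rw [hck] at this
        rcases hSj1 with h | h <;> rw [h] at this <;> simp at this
      · exfalso
        have := (act_R45_parts (e := e) (u := u) (t := k) (Or.inr g)).1
        rw [hck] at this
        rcases hSj1 with h | h <;> rw [h] at this <;> simp at this
      · exact g
    obtain ⟨hq2, hch2, _, _, _⟩ := act_R6_parts hk6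
    refine ⟨i, k, hiN, by omega, hq1, hq2, hch2, ?_⟩
    rw [hck]
    intro hcontra
    apply hphj
    rw [hcontra, hcj, hph1]

/-- Part 1 of the statement. -/
lemma main1 (hreg : RegularExec G r e)
    (hnc : ∀ i u, (e.conf (i + 1) u).C = (e.conf i u).C)
    {u : V} (hu : ActsInfOften e u) :
    ∃ v, G.Adj u v ∧ (∀ i, (e.conf i v).P = some u) ∧ ActsInfOften e v := by
  classical
  have hsel : ∀ N : ℕ, ∃ x : ℕ × ℕ × V, N ≤ x.1 ∧ x.1 < x.2.1 ∧
      G.Adj u x.2.2 ∧ (e.conf x.2.1 x.2.2).P = some u ∧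
      QuietSubTree G (e.conf x.1) u ∧ QuietSubTree G (e.conf x.2.1) u ∧
      (e.conf x.2.1 u).ph ≠ (e.conf x.1 u).ph := by
    intro N
    obtain ⟨i, k, h1, h2, h3, h4, h5, h6⟩ := quiet_pair hreg hnc hu N
    obtain ⟨v, hv⟩ := Set.nonempty_iff_ne_empty.mpr h5
    simp only [Child, Set.mem_setOf_eq] at hv
    exact ⟨(i, k, v), h1, h2, hv.1, hv.2, h3, h4, h6⟩
  choose x hx using hsel
  obtain ⟨v, hvfib⟩ := Finite.exists_infinite_fiber (fun N => (x N).2.2)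
  have hinf : ((fun N => (x N).2.2) ⁻¹' {v}).Infinite := Set.infinite_coe_iff.mp hvfib
  have hmem : ∀ M : ℕ, ∃ N, M < N ∧ (x N).2.2 = v := by
    intro M
    obtain ⟨N, hN, hMN⟩ := hinf.exists_gt M
    exact ⟨N, hMN, hN⟩
  obtain ⟨N0, _, hN0⟩ := hmem 0
  obtain ⟨hN1, hN2, hadj, hP, _, _, _⟩ := hx N0
  refine ⟨v, by rw [← hN0]; exact hadj, ?_, ?_⟩
  · intro i
    obtain ⟨N, hiN, hNv⟩ := hmem i
    obtain ⟨h1, h2, _, hPk, _, _, _⟩ := hx N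
    rw [hNv] at hPk
    exact P_back_le hreg hnc (by omega) hPk
  · intro M
    obtain ⟨N, hMN, hNv⟩ := hmem M
    obtain ⟨h1, h2, hadj', hPk, hq1, hq2, hph⟩ := hx N
    rw [hNv] at hPk hadj'
    have hPi : (e.conf (x N).1 v).P = some u := P_back_le hreg hnc (by omega) hPk
    have hv1 : v ∈ Child G (e.conf (x N).1) u := by
      simp only [Child, Set.mem_setOf_eq]; exact ⟨hadj', hPi⟩
    have hv2 : v ∈ Child G (e.conf (x N).2.1) u := by
      simp only [Child, Set.mem_setOf_eq]; exact ⟨hadj', hPk⟩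
    have hph1 := hq1 v hv1
    have hph2 := hq2 v hv2
    have : (e.conf (x N).2.1 v).ph ≠ (e.conf (x N).1 v).ph := by
      rw [hph1.2, hph2.2]; exact hph
    obtain ⟨t, ht1, ht2, ht3⟩ := ph_change (by omega) this
    exact ⟨t, by omega, ht3⟩

lemma exists_actor : ∃ u, ActsInfOften e u := by
  classical
  choose g ρ hg using fun i => (e.valid i).1
  obtain ⟨u, hu⟩ := Finite.exists_infinite_fiber g
  have hinf : (g ⁻¹' {u}).Infinite := Set.infinite_coe_iff.mp hu
  refine ⟨u, fun M => ?_⟩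
  obtain ⟨N, hN, hMN⟩ := hinf.exists_gt M
  refine ⟨N, by omega, ?_⟩
  have : g N = u := hN
  rw [← this, hg N]
  simp

end Stmt12Aux

/-- in a regular execution without color changes, every process
executing infinitely often has forever a child executing infinitely often;
hence there is a cycle path all of whose processes execute infinitely often. -/
theorem stmt12 {V : Type} [Fintype V] [DecidableEq V]
    (G : SimpleGraph V) (r : V)
    (e : Execution G r) (hreg : RegularExec G r e)
    (hnc : ∀ i u, (e.conf (i + 1) u).C = (e.conf i u).C) :
    (∀ u, ActsInfOften e u →
      ∃ v, G.Adj u v ∧ (∀ i, (e.conf i v).P = some u) ∧ ActsInfOften e v) ∧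
    (∃ l, 0 < l ∧ ∃ us : ℕ → V,
      (∀ j, us (j + l) = us j) ∧
      (∀ i j, (e.conf i (us (j + 1))).P = some (us j)) ∧
      (∀ j, ActsInfOften e (us j))) := by
  classical
  have hm1 : ∀ u, ActsInfOften e u →
      ∃ v, G.Adj u v ∧ (∀ i, (e.conf i v).P = some u) ∧ ActsInfOften e v :=
    fun u hu => main1 hreg hnc hu
  refine ⟨hm1, ?_⟩
  obtain ⟨u₀, hu₀⟩ := exists_actor (e := e)
  have hstep : ∀ x : {v : V // ActsInfOften e v}, ∃ y : {v : V // ActsInfOften e v},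
      ∀ i, (e.conf i y.1).P = some x.1 := by
    intro x
    obtain ⟨v, _, hP, hv⟩ := hm1 x.1 x.2
    exact ⟨⟨v, hv⟩, hP⟩
  choose st hst using hstep
  set w : ℕ → {v : V // ActsInfOften e v} := fun n => st^[n] ⟨u₀, hu₀⟩ with hwdef
  have hw : ∀ n, w (n+1) = st (w n) := fun n => Function.iterate_succ_apply' st n _
  have hwP : ∀ n i, (e.conf i (w (n+1)).1).P = some (w n).1 := by
    intro n i
    rw [hw n]
    exact hst (w n) i
  have hcyc : ∃ m n : ℕ, m < n ∧ (w m).1 = (w n).1 := by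
    obtain ⟨m, n, hmn, heq⟩ := Finite.exists_ne_map_eq_of_infinite (fun n => (w n).1)
    rcases lt_or_gt_of_ne hmn with h | h
    · exact ⟨m, n, h, heq⟩
    · exact ⟨n, m, h, heq.symm⟩
  obtain ⟨m, n, hlt, heqw⟩ := hcyc
  set l := n - m with hldef
  have hl0 : 0 < l := by omega
  have hn : n = m + l := by omega
  refine ⟨l, hl0, fun j => (w (m + j % l)).1, ?_, ?_, ?_⟩
  · intro j
    simp only [Nat.add_mod_right]
  · intro i j
    have hjl : j % l < l := Nat.mod_lt _ hl0
    rcases Nat.lt_or_ge (j % l + 1) l with hc | hc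
    · have hmod : (j+1) % l = j % l + 1 := by
        have h1 : 1 % l = 1 := Nat.mod_eq_of_lt (by omega)
        rw [Nat.add_mod, h1, Nat.mod_eq_of_lt hc]
      simp only [hmod]
      have harith : m + (j % l + 1) = (m + j % l) + 1 := by omega
      rw [harith]
      exact hwP (m + j % l) i
    · have hceq : j % l + 1 = l := by omega
      have hmod : (j+1) % l = 0 := by
        rcases Nat.lt_or_ge 1 l with h2 | h2
        · rw [Nat.add_mod, Nat.mod_eq_of_lt h2, hceq, Nat.mod_self]
        · have hl1 : l = 1 := by omega
          simp [hl1, Nat.mod_one]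
      simp only [hmod, Nat.add_zero]
      rw [heqw]
      have harith : n = (m + j % l) + 1 := by omega
      rw [harith]
      exact hwP (m + j % l) i
  · intro j
    exact (w (m + j % l)).2

end BFS
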